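/- For a finite simple graph G with n vertices and m edges, the sum over all vertices of the square of the degree satisfies Σ_{u ∈ V} deg(u)² ≤ m·(2m/(n−1) + n − 2). -/

import Mathlib

lemma das_step_arith (K D M su S S' : ℚ) (hK : 3 ≤ K) (hD : 0 ≤ D)
    (hD01 : D = 0 ∨ 1 ≤ D) (hDK : D ≤ K - 2 ∨ D = K - 1)
    (h1 : su ≤ D ^ 2) (h2 : su ≤ M - D) (h3 : D ≤ K - 1) (h4 : M ≤ K * D)
    (h5 : 2 * D ≤ M)
    (hIH : 2 * (K - 2) * S' ≤ (M - 2 * D) ^ 2 + (M - 2 * D) * (K - 2) * (K - 3))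
    (hS : S = D ^ 2 + S' + 2 * su - D) :
    2 * (K - 1) * S ≤ M ^ 2 + M * (K - 1) * (K - 2) := by
  have hKK : (0:ℚ) < K - 2 := by linarith
  rcases hD01 with rfl | hD1
  · -- D = 0 : M = 0
    have hM0 : M = 0 := le_antisymm (by linarith) (by linarith)
    subst hM0
    have hS'0 : S' ≤ 0 := by nlinarith [hIH]
    have hSle : S ≤ 0 := by
      have : su ≤ 0 := by linarith
      nlinarith [hS]
    nlinarith [mul_nonneg (by linarith : (0:ℚ) ≤ K - 1) (by linarith : (0:ℚ) ≤ -S)]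
  · have hP1 : 0 ≤ D * (K - 1 - D) * (K - 2 - D) * (2 * K - 3 - D) := by
      rcases hDK with hd | hd
      · exact mul_nonneg (mul_nonneg (mul_nonneg hD (by linarith)) (by linarith)) (by linarith)
      · rw [hd]; nlinarith []
    rcases le_total M (D ^ 2 + D) with hc | hc
    · -- Case B : su ≤ M - D is the binding bound
      have hRB : 0 ≤ (K-2)*(M^2 + M*(K-1)*(K-2)) - 2*(K-1)*(K-2)*(D^2 + 2*(M-D) - D)
          - (K-1)*((M-2*D)^2 + (M-2*D)*(K-2)*(K-3)) := by
        rcases le_total (2*D + M) ((K-1)*(4*D-3*K+6)) with hb | hb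
        · have e1 : (K-2)*(M^2 + M*(K-1)*(K-2)) - 2*(K-1)*(K-2)*(D^2 + 2*(M-D) - D)
              - (K-1)*((M-2*D)^2 + (M-2*D)*(K-2)*(K-3))
              = 2*D*(K-2)*(K-3)*(K-1-D) + (M-2*D)*((K-1)*(4*D-3*K+6) - 2*D - M) := by ring
          have p1 : 0 ≤ 2*D*(K-2)*(K-3)*(K-1-D) :=
            mul_nonneg (mul_nonneg (mul_nonneg (by linarith) (by linarith)) (by linarith)) (by linarith)
          have p2 : 0 ≤ (M-2*D)*((K-1)*(4*D-3*K+6) - 2*D - M) :=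
            mul_nonneg (by linarith) (by linarith)
          linarith [e1.ge, p1, p2]
        · have e1 : (K-2)*(M^2 + M*(K-1)*(K-2)) - 2*(K-1)*(K-2)*(D^2 + 2*(M-D) - D)
              - (K-1)*((M-2*D)^2 + (M-2*D)*(K-2)*(K-3))
              = D*(K-1-D)*(K-2-D)*(2*K-3-D)
                + (D^2 + D - M)*(M + (D^2+D) - (K-1)*(4*D-3*K+6)) := by ring
          have hdd : 0 ≤ D*(D-1) := mul_nonneg hD (by linarith)
          have p2 : 0 ≤ (D^2 + D - M)*(M + (D^2+D) - (K-1)*(4*D-3*K+6)) := by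
            apply mul_nonneg (by linarith)
            nlinarith [hb, hdd]
          linarith [e1.ge, hP1, p2]
      have e2 : (K-2)*((M^2 + M*(K-1)*(K-2)) - 2*(K-1)*S)
          = ((K-2)*(M^2 + M*(K-1)*(K-2)) - 2*(K-1)*(K-2)*(D^2 + 2*(M-D) - D)
              - (K-1)*((M-2*D)^2 + (M-2*D)*(K-2)*(K-3)))
            + (K-1)*((M-2*D)^2 + (M-2*D)*(K-2)*(K-3) - 2*(K-2)*S')
            + 4*(K-1)*(K-2)*((M-D) - su) := by rw [hS]; ring
      have p3 : 0 ≤ (K-1)*((M-2*D)^2 + (M-2*D)*(K-2)*(K-3) - 2*(K-2)*S') :=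
        mul_nonneg (by linarith) (by linarith)
      have p4 : 0 ≤ 4*(K-1)*(K-2)*((M-D) - su) :=
        mul_nonneg (mul_nonneg (by linarith) (by linarith)) (by linarith)
      have hfin : 0 ≤ (K-2)*((M^2 + M*(K-1)*(K-2)) - 2*(K-1)*S) := by
        rw [e2]; linarith
      have := (mul_nonneg_iff_of_pos_left hKK).mp hfin
      linarith
    · -- Case A : su ≤ D^2 is the binding bound
      have hRA : 0 ≤ (K-2)*(M^2 + M*(K-1)*(K-2)) - 2*(K-1)*(K-2)*(D^2 + 2*D^2 - D)
          - (K-1)*((M-2*D)^2 + (M-2*D)*(K-2)*(K-3)) := by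
        rcases le_total ((D^2 + D) + M) ((K-1)*(K-2+4*D)) with hb | hb
        · have e1 : (K-2)*(M^2 + M*(K-1)*(K-2)) - 2*(K-1)*(K-2)*(D^2 + 2*D^2 - D)
              - (K-1)*((M-2*D)^2 + (M-2*D)*(K-2)*(K-3))
              = D*(K-1-D)*(K-2-D)*(2*K-3-D)
                + (M - (D^2+D))*((K-1)*(K-2+4*D) - (D^2+D) - M) := by ring
          have p2 : 0 ≤ (M - (D^2+D))*((K-1)*(K-2+4*D) - (D^2+D) - M) :=
            mul_nonneg (by linarith) (by linarith)
          linarith [e1.ge, hP1, p2]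
        · have e1 : (K-2)*(M^2 + M*(K-1)*(K-2)) - 2*(K-1)*(K-2)*(D^2 + 2*D^2 - D)
              - (K-1)*((M-2*D)^2 + (M-2*D)*(K-2)*(K-3))
              = D*(3*K-4)*(K-2)*(K-1-D) + (K*D - M)*(M + K*D - (K-1)*(K-2+4*D)) := by ring
          have hdd : 0 ≤ D*(K-1-D) := mul_nonneg hD (by linarith)
          have p1 : 0 ≤ D*(3*K-4)*(K-2)*(K-1-D) :=
            mul_nonneg (mul_nonneg (mul_nonneg hD (by linarith)) (by linarith)) (by linarith)
          have p2 : 0 ≤ (K*D - M)*(M + K*D - (K-1)*(K-2+4*D)) := by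
            apply mul_nonneg (by linarith)
            nlinarith [hb, hdd]
          linarith [e1.ge, p1, p2]
      have e2 : (K-2)*((M^2 + M*(K-1)*(K-2)) - 2*(K-1)*S)
          = ((K-2)*(M^2 + M*(K-1)*(K-2)) - 2*(K-1)*(K-2)*(D^2 + 2*D^2 - D)
              - (K-1)*((M-2*D)^2 + (M-2*D)*(K-2)*(K-3)))
            + (K-1)*((M-2*D)^2 + (M-2*D)*(K-2)*(K-3) - 2*(K-2)*S')
            + 4*(K-1)*(K-2)*(D^2 - su) := by rw [hS]; ring
      have p3 : 0 ≤ (K-1)*((M-2*D)^2 + (M-2*D)*(K-2)*(K-3) - 2*(K-2)*S') :=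
        mul_nonneg (by linarith) (by linarith)
      have p4 : 0 ≤ 4*(K-1)*(K-2)*(D^2 - su) :=
        mul_nonneg (mul_nonneg (by linarith) (by linarith)) (by linarith)
      have hfin : 0 ≤ (K-2)*((M^2 + M*(K-1)*(K-2)) - 2*(K-1)*S) := by
        rw [e2]; linarith
      have := (mul_nonneg_iff_of_pos_left hKK).mp hfin
      linarith


lemma das_main {V : Type*} [Fintype V] [DecidableEq V] (G : SimpleGraph V)
    [DecidableRel G.Adj] :
    ∀ (N : ℕ) (s : Finset V), s.card = N →
    2 * ((N : ℚ) - 1) * (∑ v ∈ s, ((G.neighborFinset v ∩ s).card : ℚ) ^ 2) ≤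
      (∑ v ∈ s, ((G.neighborFinset v ∩ s).card : ℚ)) ^ 2
      + (∑ v ∈ s, ((G.neighborFinset v ∩ s).card : ℚ)) * ((N : ℚ) - 1) * ((N : ℚ) - 2) := by
  intro N
  induction N using Nat.strong_induction_on with
  | _ N IH =>
  intro s hs
  rcases Nat.lt_or_ge N 3 with hN3 | hN3
  · interval_cases N
    · obtain rfl := Finset.card_eq_zero.1 hs
      simp
    · obtain ⟨a, rfl⟩ := Finset.card_eq_one.1 hs
      have h0 : G.neighborFinset a ∩ {a} = ∅ :=
        Finset.inter_singleton_of_notMem (by simp)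
      simp [h0]
    · obtain ⟨a, b, hab, rfl⟩ := Finset.card_eq_two.1 hs
      have hna : ((G.neighborFinset a ∩ {a, b}).card : ℚ) = if G.Adj a b then 1 else 0 := by
        split_ifs with h
        · have : G.neighborFinset a ∩ {a, b} = {b} := by
            ext x
            simp only [Finset.mem_inter, SimpleGraph.mem_neighborFinset, Finset.mem_insert,
              Finset.mem_singleton]
            constructor
            · rintro ⟨hadj, (rfl | rfl)⟩
              · exact absurd hadj (G.loopless.irrefl x)
              · rfl
            · rintro rfl; exact ⟨h, Or.inr rfl⟩
          simp [this]
        · have : G.neighborFinset a ∩ {a, b} = ∅ := by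
            ext x
            simp only [Finset.mem_inter, SimpleGraph.mem_neighborFinset, Finset.mem_insert,
              Finset.mem_singleton, Finset.notMem_empty, iff_false, not_and]
            rintro hadj (rfl | rfl)
            · exact (G.loopless.irrefl x) hadj
            · exact h hadj
          simp [this]
      have hnb : ((G.neighborFinset b ∩ {a, b}).card : ℚ) = if G.Adj a b then 1 else 0 := by
        split_ifs with h
        · have : G.neighborFinset b ∩ {a, b} = {a} := by
            ext x
            simp only [Finset.mem_inter, SimpleGraph.mem_neighborFinset, Finset.mem_insert,
              Finset.mem_singleton]
            constructor
            · rintro ⟨hadj, (rfl | rfl)⟩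
              · rfl
              · exact absurd hadj (G.loopless.irrefl x)
            · rintro rfl; exact ⟨h.symm, Or.inl rfl⟩
          simp [this]
        · have : G.neighborFinset b ∩ {a, b} = ∅ := by
            ext x
            simp only [Finset.mem_inter, SimpleGraph.mem_neighborFinset, Finset.mem_insert,
              Finset.mem_singleton, Finset.notMem_empty, iff_false, not_and]
            rintro hadj (rfl | rfl)
            · exact h hadj.symm
            · exact (G.loopless.irrefl x) hadj
          simp [this]
      rw [Finset.sum_pair hab, Finset.sum_pair hab, hna, hnb]
      split_ifs with h <;> norm_num
  · -- main induction step, N ≥ 3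
    classical
    have hNe : s.Nonempty := by rw [← Finset.card_pos, hs]; omega
    obtain ⟨u, hu, hmax⟩ := s.exists_max_image (fun v => (G.neighborFinset v ∩ s).card) hNe
    set s' := s.erase u with hs'def
    have hc' : s'.card = N - 1 := by rw [hs'def, Finset.card_erase_of_mem hu, hs]
    set nb := G.neighborFinset u ∩ s' with hnbdef
    have hnbs : G.neighborFinset u ∩ s = nb := by
      ext x
      simp only [hnbdef, hs'def, Finset.mem_inter, Finset.mem_erase, SimpleGraph.mem_neighborFinset]
      constructor
      · rintro ⟨ha, hxs⟩; exact ⟨ha, ⟨ha.ne', hxs⟩⟩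
      · rintro ⟨ha, _, hxs⟩; exact ⟨ha, hxs⟩
    set Δ := nb.card with hΔdef
    have hΔeq : (G.neighborFinset u ∩ s).card = Δ := by rw [hnbs]
    -- local degree relation
    have f1 : ∀ v ∈ s', ((G.neighborFinset v ∩ s).card : ℚ)
        = ((G.neighborFinset v ∩ s').card : ℚ) + (if G.Adj u v then 1 else 0) := by
      intro v hv
      by_cases hadj : G.Adj u v
      · have hmem : u ∈ G.neighborFinset v ∩ s :=
          Finset.mem_inter.2 ⟨(SimpleGraph.mem_neighborFinset _ _ _).2 hadj.symm, hu⟩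
        have hrw : G.neighborFinset v ∩ s' = (G.neighborFinset v ∩ s).erase u := by
          rw [hs'def]; ext x
          simp only [Finset.mem_inter, Finset.mem_erase]
          tauto
        have hpos : 1 ≤ (G.neighborFinset v ∩ s).card :=
          Finset.card_pos.2 ⟨u, hmem⟩
        rw [hrw, Finset.card_erase_of_mem hmem, if_pos hadj, Nat.cast_sub hpos]
        push_cast
        ring
      · have hrw : G.neighborFinset v ∩ s' = G.neighborFinset v ∩ s := by
          rw [hs'def]; ext x
          simp only [Finset.mem_inter, Finset.mem_erase]
          constructor
          · tauto
          · rintro ⟨hx, hxs⟩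
            refine ⟨hx, ?_, hxs⟩
            rintro rfl
            exact hadj ((SimpleGraph.mem_neighborFinset _ _ _).1 hx).symm
        rw [hrw, if_neg hadj]
        ring
    -- sums
    have hMsplit : ∑ v ∈ s, ((G.neighborFinset v ∩ s).card : ℚ)
        = (Δ : ℚ) + ∑ v ∈ s', ((G.neighborFinset v ∩ s).card : ℚ) := by
      rw [← Finset.add_sum_erase s _ hu, hΔeq]
    have hSsplit : ∑ v ∈ s, ((G.neighborFinset v ∩ s).card : ℚ) ^ 2
        = (Δ : ℚ) ^ 2 + ∑ v ∈ s', ((G.neighborFinset v ∩ s).card : ℚ) ^ 2 := by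
      rw [← Finset.add_sum_erase s _ hu, hΔeq]
    have hfilter : s'.filter (fun v => G.Adj u v) = nb := by
      ext x
      simp [hnbdef, SimpleGraph.mem_neighborFinset, and_comm]
    have hsum_ite : ∑ v ∈ s', (if G.Adj u v then (1 : ℚ) else 0) = (Δ : ℚ) := by
      rw [Finset.sum_boole, hfilter]
    have hM'rel : ∑ v ∈ s', ((G.neighborFinset v ∩ s).card : ℚ)
        = (∑ v ∈ s', ((G.neighborFinset v ∩ s').card : ℚ)) + (Δ : ℚ) := by
      rw [← hsum_ite, ← Finset.sum_add_distrib]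
      exact Finset.sum_congr rfl f1
    have hgsum : ∑ v ∈ nb, ((G.neighborFinset v ∩ s').card : ℚ)
        = (∑ v ∈ nb, ((G.neighborFinset v ∩ s).card : ℚ)) - (Δ : ℚ) := by
      have key : ∀ v ∈ nb, ((G.neighborFinset v ∩ s').card : ℚ)
          = ((G.neighborFinset v ∩ s).card : ℚ) - 1 := by
        intro v hv
        have hv' : v ∈ s' := (Finset.mem_inter.1 hv).2
        have hadj : G.Adj u v := (SimpleGraph.mem_neighborFinset _ _ _).1 (Finset.mem_inter.1 hv).1
        have := f1 v hv'
        rw [if_pos hadj] at this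
        linarith
      rw [Finset.sum_congr rfl key, Finset.sum_sub_distrib, Finset.sum_const, nsmul_eq_mul,
        ← hΔdef, mul_one]
    have hS'rel : ∑ v ∈ s', ((G.neighborFinset v ∩ s).card : ℚ) ^ 2
        = (∑ v ∈ s', ((G.neighborFinset v ∩ s').card : ℚ) ^ 2)
          + 2 * ((∑ v ∈ nb, ((G.neighborFinset v ∩ s).card : ℚ)) - (Δ : ℚ)) + (Δ : ℚ) := by
      have key : ∀ v ∈ s', ((G.neighborFinset v ∩ s).card : ℚ) ^ 2
          = ((G.neighborFinset v ∩ s').card : ℚ) ^ 2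
            + (2 * ((G.neighborFinset v ∩ s').card : ℚ)) * (if G.Adj u v then (1:ℚ) else 0)
            + (if G.Adj u v then (1:ℚ) else 0) := by
        intro v hv
        rw [f1 v hv]
        by_cases hadj : G.Adj u v <;> simp [hadj] <;> ring
      rw [Finset.sum_congr rfl key, Finset.sum_add_distrib, Finset.sum_add_distrib, hsum_ite]
      have hmid : ∑ v ∈ s', (2 * ((G.neighborFinset v ∩ s').card : ℚ)) * (if G.Adj u v then (1:ℚ) else 0)
          = 2 * ((∑ v ∈ nb, ((G.neighborFinset v ∩ s).card : ℚ)) - (Δ : ℚ)) := by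
        simp only [mul_ite, mul_one, mul_zero]
        rw [← Finset.sum_filter, hfilter, ← hgsum, Finset.mul_sum]
      rw [hmid]
    have hcastN1 : ((N - 1 : ℕ) : ℚ) = (N:ℚ) - 1 := by
      rw [Nat.cast_sub (by omega : 1 ≤ N)]; norm_num
    have hK3 : (3 : ℚ) ≤ (N:ℚ) := by exact_mod_cast hN3
    have hDnn : (0:ℚ) ≤ (Δ:ℚ) := Nat.cast_nonneg _
    have hfle : ∀ v ∈ s, ((G.neighborFinset v ∩ s).card : ℚ) ≤ (Δ:ℚ) := by
      intro v hv
      exact_mod_cast le_of_le_of_eq (hmax v hv) hΔeq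
    have h1 : (∑ v ∈ nb, ((G.neighborFinset v ∩ s).card : ℚ)) ≤ (Δ:ℚ) ^ 2 := by
      have hsub : nb ⊆ s := by
        rw [hnbdef, hs'def]
        exact (Finset.inter_subset_right).trans (Finset.erase_subset _ _)
      calc (∑ v ∈ nb, ((G.neighborFinset v ∩ s).card : ℚ))
          ≤ nb.card • (Δ:ℚ) := Finset.sum_le_card_nsmul _ _ _ (fun v hv => hfle v (hsub hv))
        _ = (Δ:ℚ) ^ 2 := by rw [nsmul_eq_mul, ← hΔdef]; ring
    have h2 : (∑ v ∈ nb, ((G.neighborFinset v ∩ s).card : ℚ))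
        ≤ (∑ v ∈ s, ((G.neighborFinset v ∩ s).card : ℚ)) - (Δ:ℚ) := by
      have hsub : nb ⊆ s' := by rw [hnbdef]; exact Finset.inter_subset_right
      have hle : (∑ v ∈ nb, ((G.neighborFinset v ∩ s).card : ℚ))
          ≤ ∑ v ∈ s', ((G.neighborFinset v ∩ s).card : ℚ) :=
        Finset.sum_le_sum_of_subset_of_nonneg hsub (fun v _ _ => Nat.cast_nonneg _)
      linarith [hMsplit, hle]
    have hΔN : Δ ≤ N - 1 := by
      calc Δ = nb.card := hΔdef
        _ ≤ s'.card := Finset.card_le_card (by rw [hnbdef]; exact Finset.inter_subset_right)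
        _ = N - 1 := hc'
    have h3 : (Δ:ℚ) ≤ (N:ℚ) - 1 := by rw [← hcastN1]; exact_mod_cast hΔN
    have h4 : (∑ v ∈ s, ((G.neighborFinset v ∩ s).card : ℚ)) ≤ (N:ℚ) * (Δ:ℚ) := by
      calc (∑ v ∈ s, ((G.neighborFinset v ∩ s).card : ℚ))
          ≤ s.card • (Δ:ℚ) := Finset.sum_le_card_nsmul _ _ _ hfle
        _ = (N:ℚ) * (Δ:ℚ) := by rw [nsmul_eq_mul, hs]
    have hM'nonneg : (0:ℚ) ≤ ∑ v ∈ s', ((G.neighborFinset v ∩ s').card : ℚ) :=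
      Finset.sum_nonneg (fun v _ => Nat.cast_nonneg _)
    have h5 : 2 * (Δ:ℚ) ≤ ∑ v ∈ s, ((G.neighborFinset v ∩ s).card : ℚ) := by
      linarith [hMsplit, hM'rel, hM'nonneg]
    have hD01 : (Δ:ℚ) = 0 ∨ 1 ≤ (Δ:ℚ) := by
      rcases Nat.eq_zero_or_pos Δ with h | h
      · left; rw [h]; norm_num
      · right; exact_mod_cast h
    have hDK : (Δ:ℚ) ≤ (N:ℚ) - 2 ∨ (Δ:ℚ) = (N:ℚ) - 1 := by
      rcases (by omega : Δ ≤ N - 2 ∨ Δ = N - 1) with h | h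
      · left
        have hcastN2 : ((N - 2 : ℕ) : ℚ) = (N:ℚ) - 2 := by
          rw [Nat.cast_sub (by omega : 2 ≤ N)]; norm_num
        rw [← hcastN2]; exact_mod_cast h
      · right; rw [h, hcastN1]
    have IH' := IH (N - 1) (by omega) s' hc'
    rw [hcastN1] at IH'
    have hM'eq : (∑ v ∈ s', ((G.neighborFinset v ∩ s').card : ℚ))
        = (∑ v ∈ s, ((G.neighborFinset v ∩ s).card : ℚ)) - 2 * (Δ:ℚ) := by
      linarith [hMsplit, hM'rel]
    rw [hM'eq] at IH'
    have hIH2 : 2 * ((N:ℚ) - 2) * (∑ v ∈ s', ((G.neighborFinset v ∩ s').card : ℚ) ^ 2)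
        ≤ ((∑ v ∈ s, ((G.neighborFinset v ∩ s).card : ℚ)) - 2 * (Δ:ℚ)) ^ 2
          + ((∑ v ∈ s, ((G.neighborFinset v ∩ s).card : ℚ)) - 2 * (Δ:ℚ)) * ((N:ℚ) - 2) * ((N:ℚ) - 3) := by
      linarith [IH']
    have hSeq : (∑ v ∈ s, ((G.neighborFinset v ∩ s).card : ℚ) ^ 2)
        = (Δ:ℚ) ^ 2 + (∑ v ∈ s', ((G.neighborFinset v ∩ s').card : ℚ) ^ 2)
          + 2 * (∑ v ∈ nb, ((G.neighborFinset v ∩ s).card : ℚ)) - (Δ:ℚ) := by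
      linarith [hSsplit, hS'rel]
    exact das_step_arith ((N:ℚ)) ((Δ:ℚ))
      (∑ v ∈ s, ((G.neighborFinset v ∩ s).card : ℚ))
      (∑ v ∈ nb, ((G.neighborFinset v ∩ s).card : ℚ))
      (∑ v ∈ s, ((G.neighborFinset v ∩ s).card : ℚ) ^ 2)
      (∑ v ∈ s', ((G.neighborFinset v ∩ s').card : ℚ) ^ 2)
      hK3 hDnn hD01 hDK h1 h2 h3 h4 h5 hIH2 hSeq
theorem sum_degree_sq_le_das {V : Type*} [Fintype V] [DecidableEq V]
    (G : SimpleGraph V) [DecidableRel G.Adj] (n m : ℕ)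
    (hn : Fintype.card V = n) (hm : G.edgeFinset.card = m) (hn2 : 2 ≤ n) :
    (∑ u : V, (G.degree u : ℚ) ^ 2) ≤
      (m : ℚ) * (2 * m / (n - 1) + n - 2) := by
  have key := das_main G n Finset.univ (by rw [Finset.card_univ, hn])
  simp only [Finset.inter_univ] at key
  have e1 : ∑ v ∈ Finset.univ, ((G.neighborFinset v).card : ℚ) ^ 2
      = ∑ u : V, (G.degree u : ℚ) ^ 2 := by
    apply Finset.sum_congr rfl
    intro v _
    rw [SimpleGraph.card_neighborFinset_eq_degree]
  have e2 : ∑ v ∈ Finset.univ, ((G.neighborFinset v).card : ℚ) = 2 * (m : ℚ) := by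
    have h := SimpleGraph.sum_degrees_eq_twice_card_edges G
    rw [hm] at h
    have : ∑ v ∈ Finset.univ, ((G.neighborFinset v).card : ℚ)
        = ((∑ v : V, G.degree v : ℕ) : ℚ) := by
      push_cast
      apply Finset.sum_congr rfl
      intro v _
      rw [SimpleGraph.card_neighborFinset_eq_degree]
    rw [this, h]
    push_cast
    ring
  rw [e1, e2] at key
  have hpos : (0 : ℚ) < (n : ℚ) - 1 := by
    have : (2 : ℚ) ≤ (n : ℚ) := by exact_mod_cast hn2
    linarith
  have hgoal : (m : ℚ) * (2 * m / ((n : ℚ) - 1) + (n : ℚ) - 2)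
      = (4 * (m : ℚ) ^ 2 + 2 * m * ((n : ℚ) - 1) * ((n : ℚ) - 2)) / (2 * ((n : ℚ) - 1)) := by
    field_simp
    ring
  rw [hgoal, le_div_iff₀ (by linarith : (0:ℚ) < 2 * ((n : ℚ) - 1))]
  nlinarith [key]
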